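/- Let ω ∈ ℝ, C > 0, s > 1, h ∈ ℝ, and let g : ℝ → ℂ be continuous with |g(t)| ≤ C·(1 + |t|)^{−s} for all t ∈ ℝ. Then the function ξ ↦ (1/(2πi))·∫_ℝ e^{i·h·(t + iω − ξ)} · g(t)/(ξ − t − iω) dt is holomorphic (complex differentiable) at every point of the open half-plane {ξ ∈ ℂ : Im ξ < ω}. (Part of Lemma 5.1: the function Π⁺_h f, represented by the contour integral along the line Im η = ω, is analytic in the half-plane below that line.) -/

import Mathlib

open MeasureTheory Set

/-- Part of Lemma 5.1: the function `Π⁺_h f`, represented by the contour integral along the line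
`Im η = ω`, is analytic in the half-plane below that line. -/
theorem stmt_14 (ω C s h : ℝ) (hC : 0 < C) (hs : 1 < s) (g : ℝ → ℂ)
    (hg : Continuous g) (hbound : ∀ t : ℝ, ‖g t‖ ≤ C * (1 + |t|) ^ (-s)) :
    ∀ ξ : ℂ, ξ.im < ω →
      DifferentiableAt ℂ (fun z : ℂ =>
        (2 * (Real.pi : ℂ) * Complex.I)⁻¹ *
          ∫ t : ℝ, Complex.exp (Complex.I * h * ((t : ℂ) + ω * Complex.I - z)) * g t /
            (z - t - ω * Complex.I)) ξ := by
  intro ξ hξ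
  apply DifferentiableAt.const_mul
  set ε : ℝ := (ω - ξ.im) / 2 with hε
  have hε0 : 0 < ε := by simp [hε]; linarith
  -- the contour point
  set c : ℝ → ℂ := fun t => (t : ℂ) + ω * Complex.I with hc
  -- lower bound for the denominator on the ball
  have hden : ∀ z ∈ Metric.ball ξ ε, ∀ t : ℝ, ε ≤ ‖z - c t‖ := by
    intro z hz t
    have him : |z.im - ξ.im| ≤ ‖z - ξ‖ := by
      simpa using Complex.abs_im_le_norm (z - ξ)
    rw [Metric.mem_ball, Complex.dist_eq] at hz
    have h1 : z.im < ξ.im + ε := by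
      have := abs_lt.mp (lt_of_le_of_lt him hz)
      linarith [this.1, this.2]
    have h2 : ε ≤ ω - z.im := by simp [hε] at h1 ⊢; linarith
    have : ω - z.im ≤ |(z - c t).im| := by
      have him2 : (z - c t).im = z.im - ω := by simp [hc]
      rw [him2]
      calc ω - z.im = -(z.im - ω) := by ring
        _ ≤ |z.im - ω| := neg_le_abs _
    calc ε ≤ |(z - c t).im| := le_trans h2 this
      _ ≤ ‖z - c t‖ := Complex.abs_im_le_norm _
  have hne : ∀ z ∈ Metric.ball ξ ε, ∀ t : ℝ, z - c t ≠ 0 := by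
    intro z hz t h0
    have := hden z hz t
    rw [h0] at this; simp at this; linarith
  -- bound for the exponential on the ball
  set K : ℝ := Real.exp (|h| * (3 * ε)) with hK
  have hexp : ∀ z ∈ Metric.ball ξ ε, ∀ t : ℝ,
      ‖Complex.exp (Complex.I * h * (c t - z))‖ ≤ K := by
    intro z hz t
    rw [Complex.norm_exp]
    apply Real.exp_le_exp.mpr
    have : (Complex.I * h * (c t - z)).re = -h * (ω - z.im) := by
      simp [hc, Complex.mul_re, Complex.mul_im, Complex.sub_im]
      try ring
    rw [this]
    rw [Metric.mem_ball, Complex.dist_eq] at hz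
    have him : |z.im - ξ.im| ≤ ‖z - ξ‖ := by
      simpa using Complex.abs_im_le_norm (z - ξ)
    have h1 : |z.im - ξ.im| < ε := lt_of_le_of_lt him hz
    have h1' := abs_lt.mp h1
    have h2 : 0 < ω - z.im := by simp [hε] at h1' ⊢; linarith
    have h3 : ω - z.im ≤ 3 * ε := by simp [hε] at h1' ⊢; linarith
    calc -h * (ω - z.im) ≤ |h| * (ω - z.im) := by
          apply mul_le_mul_of_nonneg_right _ h2.le
          exact neg_le_abs h
      _ ≤ |h| * (3 * ε) := by
          exact mul_le_mul_of_nonneg_left h3 (abs_nonneg h)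
  have hK0 : 0 < K := Real.exp_pos _
  -- the integrand and its derivative
  set F : ℂ → ℝ → ℂ := fun z t =>
    Complex.exp (Complex.I * h * ((t : ℂ) + ω * Complex.I - z)) * g t /
      (z - t - ω * Complex.I) with hF
  set F' : ℂ → ℝ → ℂ := fun z t =>
    (-(Complex.I * h)) * Complex.exp (Complex.I * h * (c t - z)) * g t / (z - c t)
      - Complex.exp (Complex.I * h * (c t - z)) * g t / (z - c t) ^ 2 with hF'
  have hFz : ∀ z t, F z t = Complex.exp (Complex.I * h * (c t - z)) * g t / (z - c t) := by
    intro z t; simp [hF, hc]; ring_nf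
  -- differentiability of F in z
  have hdiff : ∀ t : ℝ, ∀ z ∈ Metric.ball ξ ε, HasDerivAt (fun z => F z t) (F' z t) z := by
    intro t z hz
    have h0 := hne z hz t
    have he : HasDerivAt (fun z : ℂ => Complex.exp (Complex.I * h * (c t - z)))
        ((-(Complex.I * h)) * Complex.exp (Complex.I * h * (c t - z))) z := by
      have h1 : HasDerivAt (fun z : ℂ => Complex.I * h * (c t - z)) (-(Complex.I * h)) z := by
        simpa using ((hasDerivAt_id z).const_sub (c t)).const_mul (Complex.I * h)
      simpa [mul_comm] using h1.cexp
    have hinv : HasDerivAt (fun z : ℂ => (z - c t)⁻¹) (-1 / (z - c t) ^ 2) z := by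
      have h1 : HasDerivAt (fun z : ℂ => z - c t) 1 z := (hasDerivAt_id z).sub_const (c t)
      exact h1.inv h0
    have := (he.mul_const (g t)).mul hinv
    have h2 : (fun z => F z t) = fun z =>
        (Complex.exp (Complex.I * h * (c t - z)) * g t) * (z - c t)⁻¹ := by
      funext z; rw [hFz]; ring
    rw [h2]
    refine this.congr_deriv ?_
    simp [hF']
    field_simp
    ring
  -- measurability
  have hc_cont : Continuous c := by
    simp only [hc]; fun_prop
  have hFmeas : ∀ z : ℂ, z ∈ Metric.ball ξ ε → AEStronglyMeasurable (F z) volume := by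
    intro z hz
    apply Continuous.aestronglyMeasurable
    simp only [hF]
    apply Continuous.div
    · fun_prop
    · fun_prop
    · intro t
      have := hne z hz t
      simpa [hc, sub_sub] using this
  -- integrable dominating function for F itself
  have hint_base : Integrable (fun t : ℝ => (1 + |t| : ℝ) ^ (-s)) volume := by
    have := integrable_one_add_norm (E := ℝ) (μ := volume) (r := s) (by simpa using hs)
    simpa using this
  -- bound and integrability of F ξ
  have hFbound : ∀ z ∈ Metric.ball ξ ε, ∀ t : ℝ,
      ‖F z t‖ ≤ (K * C / ε) * (1 + |t|) ^ (-s) := by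
    intro z hz t
    rw [hFz]
    rw [norm_div, norm_mul]
    rw [div_le_iff₀ (lt_of_lt_of_le hε0 (by simpa using hden z hz t))]
    calc ‖Complex.exp (Complex.I * h * (c t - z))‖ * ‖g t‖
        ≤ K * (C * (1 + |t|) ^ (-s)) := by
          apply mul_le_mul (hexp z hz t) (hbound t) (norm_nonneg _) hK0.le
      _ = (K * C / ε) * (1 + |t|) ^ (-s) * ε := by field_simp
      _ ≤ (K * C / ε) * (1 + |t|) ^ (-s) * ‖z - c t‖ := by
          apply mul_le_mul_of_nonneg_left (by simpa using hden z hz t)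
          positivity
  have hFint : Integrable (F ξ) volume := by
    apply Integrable.mono' (hint_base.const_mul (K * C / ε))
      (hFmeas ξ (Metric.mem_ball_self hε0))
    exact Filter.Eventually.of_forall (hFbound ξ (Metric.mem_ball_self hε0))
  -- bound on F'
  have hF'bound : ∀ t : ℝ, ∀ z ∈ Metric.ball ξ ε,
      ‖F' z t‖ ≤ (K * C * (|h| / ε + 1 / ε ^ 2)) * (1 + |t|) ^ (-s) := by
    intro t z hz
    have hd := hden z hz t
    have hd0 : (0:ℝ) < ‖z - c t‖ := lt_of_lt_of_le hε0 hd
    have hbt : (0:ℝ) ≤ (1 + |t|) ^ (-s) := by positivity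
    have h1 : ‖(-(Complex.I * h)) * Complex.exp (Complex.I * h * (c t - z)) * g t / (z - c t)‖
        ≤ |h| * K * (C * (1 + |t|) ^ (-s)) / ε := by
      rw [norm_div, norm_mul, norm_mul]
      apply div_le_div₀ _ _ hε0 (by simpa using hd)
      · positivity
      · have : ‖-(Complex.I * h)‖ = |h| := by
          simp
        rw [this]
        apply mul_le_mul _ (hbound t) (norm_nonneg _) (by positivity)
        exact mul_le_mul_of_nonneg_left (hexp z hz t) (abs_nonneg h)
    have h2 : ‖Complex.exp (Complex.I * h * (c t - z)) * g t / (z - c t) ^ 2‖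
        ≤ K * (C * (1 + |t|) ^ (-s)) / ε ^ 2 := by
      rw [norm_div, norm_mul, norm_pow]
      apply div_le_div₀ _ _ (by positivity) _
      · positivity
      · exact mul_le_mul (hexp z hz t) (hbound t) (norm_nonneg _) hK0.le
      · exact pow_le_pow_left₀ hε0.le (by simpa using hd) 2
    calc ‖F' z t‖ ≤ ‖(-(Complex.I * h)) * Complex.exp (Complex.I * h * (c t - z)) * g t / (z - c t)‖
          + ‖Complex.exp (Complex.I * h * (c t - z)) * g t / (z - c t) ^ 2‖ := norm_sub_le _ _
      _ ≤ |h| * K * (C * (1 + |t|) ^ (-s)) / ε + K * (C * (1 + |t|) ^ (-s)) / ε ^ 2 :=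
          add_le_add h1 h2
      _ = (K * C * (|h| / ε + 1 / ε ^ 2)) * (1 + |t|) ^ (-s) := by field_simp
  -- measurability of F' ξ
  have hF'meas : AEStronglyMeasurable (F' ξ) volume := by
    apply Continuous.aestronglyMeasurable
    have hne' : ∀ t : ℝ, ξ - c t ≠ 0 := hne ξ (Metric.mem_ball_self hε0)
    simp only [hF']
    apply Continuous.sub
    · exact Continuous.div (by fun_prop) (by fun_prop) (fun t => hne' t)
    · exact Continuous.div (by fun_prop) (by fun_prop)
        (fun t => pow_ne_zero 2 (hne' t))
  -- apply the dominated-derivative theorem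
  have key := hasDerivAt_integral_of_dominated_loc_of_deriv_le (μ := volume)
    (F := F) (F' := F') (x₀ := ξ)
    (bound := fun t => (K * C * (|h| / ε + 1 / ε ^ 2)) * (1 + |t|) ^ (-s))
    (Metric.ball_mem_nhds ξ hε0)
    (Filter.eventually_of_mem (Metric.ball_mem_nhds ξ hε0) hFmeas)
    hFint hF'meas
    (Filter.Eventually.of_forall fun t => hF'bound t)
    (hint_base.const_mul _)
    (Filter.Eventually.of_forall fun t z hz => hdiff t z hz)
  exact key.2.differentiableAt
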